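/- Let T ∈ M₂(ℂ) be symmetric with real part X and imaginary part Y (so T = X + iY with X, Y real symmetric). Let u = (u₁, u₀) ∈ ℂ² be a row vector and set φ = u·Y·ᵗu ∈ ℂ. Assume φ ≠ 0 and define Z = conj(T) + (2i/φ)·Y·ᵗu·u·Y ∈ M₂(ℂ). Then det(Im Z) = -(det Y / |φ|²)·(u·Y·ᵗū)², where ū denotes the componentwise complex conjugate of u and u·Y·ᵗū is a real number. -/

import Mathlib

open Matrix

/-- Coerce a real `2×2` matrix to a complex one. -/
def matC (A : Matrix (Fin 2) (Fin 2) ℝ) : Matrix (Fin 2) (Fin 2) ℂ :=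
  A.map (fun x => (x : ℂ))

/-- Let `T = X + iY` with `X, Y` real symmetric, `u = (u₁, u₀)` a row vector,
`φ = u·Y·ᵗu ≠ 0`, and `Z = conj(T) + (2i/φ)·Y·ᵗu·u·Y`.  Then `u·Y·ᵗū` is real and
`det(Im Z) = -(det Y / |φ|²)·(u·Y·ᵗū)²`. -/
theorem det_im_Z_formula
    (X Y : Matrix (Fin 2) (Fin 2) ℝ) (hX : Xᵀ = X) (hY : Yᵀ = Y)
    (u : Fin 2 → ℂ)
    (hφ : dotProduct u ((matC Y).mulVec u) ≠ 0) :
    (dotProduct u ((matC Y).mulVec (star u))).im = 0 ∧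
    ((((matC X + Complex.I • matC Y).map (starRingEnd ℂ) +
          (2 * Complex.I / dotProduct u ((matC Y).mulVec u)) •
            Matrix.vecMulVec ((matC Y).mulVec u) (Matrix.vecMul u (matC Y))).map
        Complex.im).det : ℂ)
      = -((Y.det / Complex.normSq (dotProduct u ((matC Y).mulVec u)) : ℝ) : ℂ) *
          (dotProduct u ((matC Y).mulVec (star u))) ^ 2 := by
  have hb : Y 1 0 = Y 0 1 := by conv_lhs => rw [← hY, Matrix.transpose_apply]
  simp only [matC, dotProduct, Matrix.mulVec, Matrix.vecMul, Matrix.vecMulVec,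
    Matrix.map_apply, Fin.sum_univ_two, Matrix.det_fin_two, Matrix.add_apply,
    Matrix.smul_apply, Matrix.of_apply, Pi.star_apply, smul_eq_mul, hb] at *
  have hns : Complex.normSq (u 0 * ((Y 0 0:ℂ) * u 0 + (Y 0 1:ℂ) * u 1) +
      u 1 * ((Y 0 1:ℂ) * u 0 + (Y 1 1:ℂ) * u 1)) ≠ 0 := by
    simpa [Complex.normSq_eq_zero] using hφ
  simp only [Complex.normSq_apply, Complex.add_re, Complex.add_im, Complex.mul_re,
    Complex.mul_im, Complex.ofReal_re, Complex.ofReal_im, zero_mul, mul_zero,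
    sub_zero, add_zero, zero_add] at hns
  constructor
  · simp [Complex.ext_iff, Complex.add_im, Complex.mul_im, Complex.mul_re]
    ring
  · simp only [pow_two, Complex.ext_iff, Complex.add_im, Complex.add_re, Complex.mul_im,
      Complex.mul_re, Complex.div_im, Complex.div_re, Complex.normSq_apply, Complex.star_def, Complex.re_ofNat, Complex.im_ofNat,
      Complex.I_re, Complex.I_im, Complex.ofReal_re, Complex.ofReal_im,
      Complex.conj_re, Complex.conj_im, Complex.neg_re, Complex.neg_im,
      Complex.sub_re, Complex.sub_im, zero_mul, mul_zero, sub_zero, add_zero,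
      zero_add, neg_zero, zero_sub, mul_one, one_mul, mul_neg, neg_mul, neg_neg]
    constructor
    · have hD : ((u 0).re * (Y 0 0 * (u 0).re + Y 0 1 * (u 1).re) - (u 0).im * (Y 0 0 * (u 0).im + Y 0 1 * (u 1).im) +
            ((u 1).re * ((u 0).re * Y 0 1 + (u 1).re * Y 1 1) -
              (u 1).im * (Y 0 1 * (u 0).im + (u 1).im * Y 1 1))) ^ 2 +
          ((u 0).re * (Y 0 0 * (u 0).im + Y 0 1 * (u 1).im) + (Y 0 0 * (u 0).re + Y 0 1 * (u 1).re) * (u 0).im +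
            ((u 1).re * (Y 0 1 * (u 0).im + (u 1).im * Y 1 1) +
              (u 1).im * ((u 0).re * Y 0 1 + (u 1).re * Y 1 1))) ^ 2 ≠ 0 := by
        convert hns using 1; ring
      field_simp [hD]
      ring
    · field_simp
      ring
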